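/- Let l > 3 be prime, suppose (x,y,z) is a solution for exponent l, and let u, v, r, s be as in the descent: gcd(u,v) = 1, uv ≠ 0, 3 ∣ v, 2 ∣ uv, x = u(u² − 3v²), y^l = v(3u² − v²), z = u² + v², gcd(r,s) = 1, rs ≠ 0, 3v = r^l, 3u² − v² = 3s^l. Then in the ring ℤ[√3] there exist nonzero elements x₁, x₂ and a unit ε such that √3·u − v = √3·x₁^l·ε and √3·u + v = √3·x₂^l·ε⁻¹. -/

import Mathlib

/-- A solution for exponent `n` of the generalized Fermat equation
`x² + y^(2n) = z³` is a triple of nonzero integers `x, y, z` with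
`gcd(x, y, z) = 1` satisfying the equation. -/
def IsSolution (n : ℕ) (x y z : ℤ) : Prop :=
  x ≠ 0 ∧ y ≠ 0 ∧ z ≠ 0 ∧ Int.gcd (Int.gcd x y) z = 1 ∧ x ^ 2 + y ^ (2 * n) = z ^ 3

/-- `√3` as an element of `ℤ[√3]`. -/
def sqrt3 : Zsqrtd 3 := ⟨0, 1⟩

namespace Zsqrt3Aux

local notation "R3" => Zsqrtd 3

lemma three_nonsquare : ∀ m : ℤ, (3 : ℤ) ≠ m * m := by
  intro m h
  have h1 : m.natAbs * m.natAbs = 3 := by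
    rw [← Int.natAbs_mul, ← h]; rfl
  have h2 : m.natAbs ∣ 3 := ⟨m.natAbs, h1.symm⟩
  rcases (Nat.Prime.eq_one_or_self_of_dvd Nat.prime_three) _ h2 with h3 | h3 <;>
    rw [h3] at h1 <;> omega

lemma norm_eq_zero' (a : R3) : a.norm = 0 ↔ a = 0 :=
  Zsqrtd.norm_eq_zero three_nonsquare a

noncomputable instance : Div R3 :=
  ⟨fun x y =>
    ⟨round (((x * star y).re : ℚ) / ((y.norm : ℤ) : ℚ)),
     round (((x * star y).im : ℚ) / ((y.norm : ℤ) : ℚ))⟩⟩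

theorem div_def (x y : R3) :
    x / y = ⟨round (((x * star y).re : ℚ) / ((y.norm : ℤ) : ℚ)),
             round (((x * star y).im : ℚ) / ((y.norm : ℤ) : ℚ))⟩ := rfl

noncomputable instance : Mod R3 :=
  ⟨fun x y => x - y * (x / y)⟩

theorem mod_def (x y : R3) : x % y = x - y * (x / y) := rfl

theorem norm_mod_lt (x : R3) {y : R3} (hy : y ≠ 0) : |(x % y).norm| < |y.norm| := by
  have hn : y.norm ≠ 0 := fun h => hy ((norm_eq_zero' y).1 h)
  have hnQ : ((y.norm : ℤ) : ℚ) ≠ 0 := Int.cast_ne_zero.2 hn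
  set a : ℤ := (x * star y).re with ha
  set b : ℤ := (x * star y).im with hb
  set q₁ : ℤ := round ((a : ℚ) / ((y.norm : ℤ) : ℚ)) with hq₁
  set q₂ : ℤ := round ((b : ℚ) / ((y.norm : ℤ) : ℚ)) with hq₂
  have hdiv : x / y = ⟨q₁, q₂⟩ := rfl
  have h1 : (x % y) * star y = ⟨a - y.norm * q₁, b - y.norm * q₂⟩ := by
    have e : (x % y) * star y = x * star y - (y.norm : R3) * (x / y) := by
      rw [mod_def, Zsqrtd.norm_eq_mul_conj]; ring
    rw [e, hdiv]
    have : (y.norm : R3) = ⟨y.norm, 0⟩ := rfl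
    rw [this]
    simp only [ha, hb, Zsqrtd.ext_iff, Zsqrtd.re_sub, Zsqrtd.im_sub, Zsqrtd.re_mul,
      Zsqrtd.im_mul, Zsqrtd.re_star, Zsqrtd.im_star]
    constructor <;> ring
  have h2 : (x % y).norm * y.norm = (a - y.norm * q₁) ^ 2 - 3 * (b - y.norm * q₂) ^ 2 := by
    have h := congrArg Zsqrtd.norm h1
    rw [Zsqrtd.norm_mul, Zsqrtd.norm_conj] at h
    rw [h, Zsqrtd.norm]
    ring
  -- bounds over ℚ
  have habs : ∀ c : ℤ, |(c : ℚ) - (y.norm : ℚ) * round ((c : ℚ) / ((y.norm : ℤ) : ℚ))| ≤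
      |((y.norm : ℤ) : ℚ)| / 2 := by
    intro c
    have h := abs_sub_round ((c : ℚ) / ((y.norm : ℤ) : ℚ))
    have e : (c : ℚ) - (y.norm : ℚ) * round ((c : ℚ) / ((y.norm : ℤ) : ℚ)) =
        ((y.norm : ℤ) : ℚ) * ((c : ℚ) / ((y.norm : ℤ) : ℚ) - round ((c : ℚ) / ((y.norm : ℤ) : ℚ))) := by
      field_simp
    rw [e, abs_mul]
    calc |((y.norm : ℤ) : ℚ)| * |(c : ℚ) / ((y.norm : ℤ) : ℚ) - round ((c : ℚ) / ((y.norm : ℤ) : ℚ))|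
        ≤ |((y.norm : ℤ) : ℚ)| * (1 / 2) := by
          exact mul_le_mul_of_nonneg_left h (abs_nonneg _)
      _ = |((y.norm : ℤ) : ℚ)| / 2 := by ring
  have hA := habs a
  have hB := habs b
  have h2Q : (((x % y).norm : ℤ) : ℚ) * ((y.norm : ℤ) : ℚ) =
      ((a : ℚ) - (y.norm : ℚ) * q₁) ^ 2 - 3 * ((b : ℚ) - (y.norm : ℚ) * q₂) ^ 2 := by
    exact_mod_cast congrArg (fun t : ℤ => (t : ℚ)) h2
  have hn1 : (1 : ℚ) ≤ |((y.norm : ℤ) : ℚ)| := by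
    rw [← Int.cast_abs]
    exact_mod_cast Int.one_le_abs (by omega : y.norm ≠ 0)
  have hA' := abs_le.1 hA
  have hB' := abs_le.1 hB
  have key : |(((x % y).norm : ℤ) : ℚ)| * |((y.norm : ℤ) : ℚ)| <
      |((y.norm : ℤ) : ℚ)| * |((y.norm : ℤ) : ℚ)| := by
    rw [← abs_mul, h2Q]
    have hpos : (0 : ℚ) < |((y.norm : ℤ) : ℚ)| := lt_of_lt_of_le one_pos hn1
    rw [abs_sub_lt_iff]
    constructor <;> nlinarith [sq_nonneg ((a : ℚ) - (y.norm : ℚ) * q₁),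
      sq_nonneg ((b : ℚ) - (y.norm : ℚ) * q₂), hA'.1, hA'.2, hB'.1, hB'.2]
  have hlt : |(((x % y).norm : ℤ) : ℚ)| < |((y.norm : ℤ) : ℚ)| := by
    have hpos : (0 : ℚ) < |((y.norm : ℤ) : ℚ)| := lt_of_lt_of_le one_pos hn1
    exact lt_of_mul_lt_mul_right key (le_of_lt hpos)
  rw [← Int.cast_abs, ← Int.cast_abs] at hlt
  exact_mod_cast hlt

theorem natAbs_norm_mod_lt (x : R3) {y : R3} (hy : y ≠ 0) :
    (x % y).norm.natAbs < y.norm.natAbs := by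
  have := norm_mod_lt x hy
  rw [Int.abs_eq_natAbs, Int.abs_eq_natAbs] at this
  exact_mod_cast this

theorem natAbs_norm_le_mul_left (x : R3) {y : R3} (hy : y ≠ 0) :
    (Zsqrtd.norm x).natAbs ≤ (Zsqrtd.norm (x * y)).natAbs := by
  rw [Zsqrtd.norm_mul, Int.natAbs_mul]
  have : 1 ≤ y.norm.natAbs := by
    have : y.norm ≠ 0 := fun h => hy ((norm_eq_zero' y).1 h)
    omega
  exact le_mul_of_one_le_right (Nat.zero_le _) this

noncomputable instance euclideanDomain : EuclideanDomain R3 :=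
  { Zsqrtd.commRing, Zsqrtd.nontrivial with
    quotient := (· / ·)
    remainder := (· % ·)
    quotient_zero := fun x => by
      simp only [div_def, star_zero, mul_zero, Zsqrtd.norm_zero]
      norm_num
      rfl
    quotient_mul_add_remainder_eq := fun a b => by simp [mod_def]
    r := _
    r_wellFounded := (measure (Int.natAbs ∘ Zsqrtd.norm)).wf
    remainder_lt := fun a b hb => natAbs_norm_mod_lt a hb
    mul_left_not_lt := fun a b hb0 => not_lt_of_ge <| natAbs_norm_le_mul_left a hb0 }

noncomputable instance : GCDMonoid R3 := EuclideanDomain.gcdMonoid _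

end Zsqrt3Aux

theorem descent_in_Z_sqrt3 (l : ℕ) (hl : l.Prime) (hl3 : 3 < l)
    (x y z u v r s : ℤ) (h : IsSolution l x y z)
    (hgcd : Int.gcd u v = 1) (huv : u * v ≠ 0) (h3v : 3 ∣ v) (h2uv : 2 ∣ u * v)
    (hx : x = u * (u ^ 2 - 3 * v ^ 2)) (hy : y ^ l = v * (3 * u ^ 2 - v ^ 2))
    (hz : z = u ^ 2 + v ^ 2)
    (hrs : Int.gcd r s = 1) (hrs0 : r * s ≠ 0)
    (hr : 3 * v = r ^ l) (hs : 3 * u ^ 2 - v ^ 2 = 3 * s ^ l) :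
    ∃ x₁ x₂ : Zsqrtd 3, x₁ ≠ 0 ∧ x₂ ≠ 0 ∧ ∃ ε : (Zsqrtd 3)ˣ,
      sqrt3 * (u : Zsqrtd 3) - (v : Zsqrtd 3) = sqrt3 * x₁ ^ l * (ε : Zsqrtd 3) ∧
      sqrt3 * (u : Zsqrtd 3) + (v : Zsqrtd 3) = sqrt3 * x₂ ^ l * ((ε⁻¹ : (Zsqrtd 3)ˣ) : Zsqrtd 3) := by
  classical
  obtain ⟨w, hw⟩ := h3v
  have hl0 : l ≠ 0 := hl.ne_zero
  have hu0 : u ≠ 0 := by intro h0; apply huv; rw [h0, zero_mul]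
  have hv0 : v ≠ 0 := by intro h0; apply huv; rw [h0, mul_zero]
  have hs0 : s ≠ 0 := by intro h0; apply hrs0; rw [h0, mul_zero]
  have hcop : IsCoprime u v := Int.isCoprime_iff_gcd_eq_one.2 hgcd
  -- key integer identity
  have hsl : s ^ l = u ^ 2 - 3 * w ^ 2 := by
    have h3 : 3 * s ^ l = 3 * (u ^ 2 - 3 * w ^ 2) := by rw [← hs, hw]; ring
    exact mul_left_cancel₀ (by norm_num) h3
  -- define the two factors
  set α : Zsqrtd 3 := ⟨u, -w⟩ with hα
  set β : Zsqrtd 3 := ⟨u, w⟩ with hβ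
  have hαβ : α * β = ((s : Zsqrtd 3)) ^ l := by
    have e1 : α * β = ((u ^ 2 - 3 * w ^ 2 : ℤ) : Zsqrtd 3) := by
      simp only [hα, hβ, Zsqrtd.ext_iff, Zsqrtd.re_mul, Zsqrtd.im_mul,
        Zsqrtd.re_intCast, Zsqrtd.im_intCast]
      constructor <;> ring
    rw [e1, ← hsl]
    push_cast
    ring
  have hα0 : α ≠ 0 := by
    intro h0
    rw [hα, Zsqrtd.ext_iff] at h0
    exact hu0 h0.1
  have hβ0 : β ≠ 0 := by
    intro h0
    rw [hβ, Zsqrtd.ext_iff] at h0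
    exact hu0 h0.1
  -- s is odd
  have hs_odd : ¬ (2 : ℤ) ∣ s ^ l := by
    rcases (Int.prime_two.2.2 u v h2uv) with h2u | h2v
    · -- u even, then v odd, so w odd
      have h2v : ¬ (2 : ℤ) ∣ v := by
        intro h2v
        obtain ⟨A, B, hAB⟩ := hcop
        have : (2 : ℤ) ∣ 1 := hAB ▸ dvd_add (Dvd.dvd.mul_left h2u A) (Dvd.dvd.mul_left h2v B)
        omega
      have h2w : ¬ (2 : ℤ) ∣ w := by
        intro h2w
        apply h2v
        rw [hw]
        exact Dvd.dvd.mul_left h2w 3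
      intro hd
      rw [hsl] at hd
      obtain ⟨c, hc⟩ := h2u
      obtain ⟨e, he⟩ := hd
      rcases Int.even_or_odd w with ⟨k, hk⟩ | ⟨k, hk⟩
      · exact h2w ⟨k, by omega⟩
      · have key : 4 * (c * c) - 12 * (k * k) - 12 * k - 3 = 2 * e := by
          linear_combination he - (u + 2 * c) * hc + 3 * (w + 2 * k + 1) * hk
        generalize c * c = p at key
        generalize k * k = q at key
        omega
    · -- v even, then u odd, and w even
      have h2u : ¬ (2 : ℤ) ∣ u := by
        intro h2u
        obtain ⟨A, B, hAB⟩ := hcop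
        have : (2 : ℤ) ∣ 1 := hAB ▸ dvd_add (Dvd.dvd.mul_left h2u A) (Dvd.dvd.mul_left h2v B)
        omega
      have h2w : (2 : ℤ) ∣ w := by
        obtain ⟨m, hm⟩ := h2v
        rcases Int.even_or_odd w with ⟨k, hk⟩ | ⟨k, hk⟩
        · exact ⟨k, by omega⟩
        · exfalso; omega
      intro hd
      rw [hsl] at hd
      obtain ⟨c, hc⟩ := h2w
      obtain ⟨e, he⟩ := hd
      rcases Int.even_or_odd u with ⟨k, hk⟩ | ⟨k, hk⟩
      · exact h2u ⟨k, by omega⟩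
      · have key : 4 * (k * k) + 4 * k + 1 - 12 * (c * c) = 2 * e := by
          linear_combination he + 3 * (w + 2 * c) * hc - (u + 2 * k + 1) * hk
        generalize c * c = p at key
        generalize k * k = q at key
        omega
  -- coprimality of α and β
  have hkey : ∀ d : Zsqrtd 3, d ∣ α → d ∣ β → IsUnit d := by
    intro d hdα hdβ
    have h2u : d ∣ ((2 * u : ℤ) : Zsqrtd 3) := by
      have hd := dvd_add hdα hdβ
      have e : α + β = ((2 * u : ℤ) : Zsqrtd 3) := by
        simp only [hα, hβ, Zsqrtd.ext_iff, Zsqrtd.re_add, Zsqrtd.im_add,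
          Zsqrtd.re_intCast, Zsqrtd.im_intCast]
        constructor <;> ring
      rwa [e] at hd
    have h6w : d ∣ ((6 * w : ℤ) : Zsqrtd 3) := by
      have hd := dvd_sub hdβ hdα
      have hd2 : d ∣ (β - α) * sqrt3 := Dvd.dvd.mul_right hd _
      have e : (β - α) * sqrt3 = ((6 * w : ℤ) : Zsqrtd 3) := by
        simp only [hα, hβ, sqrt3, Zsqrtd.ext_iff, Zsqrtd.re_mul, Zsqrtd.im_mul,
          Zsqrtd.re_sub, Zsqrtd.im_sub, Zsqrtd.re_intCast, Zsqrtd.im_intCast]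
        constructor <;> ring
      rwa [e] at hd2
    have h2u2 : d ∣ ((2 * u ^ 2 : ℤ) : Zsqrtd 3) := by
      have := Dvd.dvd.mul_right h2u ((u : ℤ) : Zsqrtd 3)
      rwa [← Int.cast_mul, (by ring : 2 * u * u = 2 * u ^ 2)] at this
    have h6w2 : d ∣ ((6 * w ^ 2 : ℤ) : Zsqrtd 3) := by
      have := Dvd.dvd.mul_right h6w ((w : ℤ) : Zsqrtd 3)
      rwa [← Int.cast_mul, (by ring : 6 * w * w = 6 * w ^ 2)] at this
    have hdsl : d ∣ ((s ^ l : ℤ) : Zsqrtd 3) := by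
      have : d ∣ α * β := Dvd.dvd.mul_right hdα β
      rwa [hαβ, ← Int.cast_pow] at this
    -- d ∣ 2
    have hcu3w : IsCoprime (u ^ 2) (3 * w ^ 2) := by
      have h1 : IsCoprime u (3 * w) := hw ▸ hcop
      have h2 : IsCoprime u 3 := h1.of_mul_right_left
      have h3 : IsCoprime u w := h1.of_mul_right_right
      exact (h2.mul_right (h3.pow_right)).pow_left
    obtain ⟨A, B, hAB⟩ := hcu3w
    have hd2 : d ∣ (2 : Zsqrtd 3) := by
      have e : (2 : Zsqrtd 3) = ((A : ℤ) : Zsqrtd 3) * ((2 * u ^ 2 : ℤ) : Zsqrtd 3) +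
          ((B : ℤ) : Zsqrtd 3) * ((6 * w ^ 2 : ℤ) : Zsqrtd 3) := by
        have e0 : (2 : ℤ) = A * (2 * u ^ 2) + B * (6 * w ^ 2) := by linarith [hAB]
        have e0' := congrArg (fun t : ℤ => ((t : Zsqrtd 3))) e0
        push_cast at e0'
        push_cast
        linear_combination e0'
      rw [e]
      exact dvd_add (Dvd.dvd.mul_left h2u2 _) (Dvd.dvd.mul_left h6w2 _)
    -- combine with s^l odd
    have hcop2 : IsCoprime (2 : ℤ) (s ^ l) := (Int.prime_two.coprime_iff_not_dvd).2 hs_odd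
    obtain ⟨C, D, hCD⟩ := hcop2
    have hd1 : d ∣ (1 : Zsqrtd 3) := by
      have e : (1 : Zsqrtd 3) = ((C : ℤ) : Zsqrtd 3) * (2 : Zsqrtd 3) +
          ((D : ℤ) : Zsqrtd 3) * ((s ^ l : ℤ) : Zsqrtd 3) := by
        have := congrArg (fun t : ℤ => ((t : Zsqrtd 3))) hCD
        push_cast at this
        push_cast
        linear_combination this.symm
      rw [e]
      exact dvd_add (Dvd.dvd.mul_left hd2 _) (Dvd.dvd.mul_left hdsl _)
    exact isUnit_of_dvd_one hd1
  have hgcd1 : IsUnit (gcd α β) := hkey _ (gcd_dvd_left α β) (gcd_dvd_right α β)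
  have hgcd2 : IsUnit (gcd β α) := hkey _ (gcd_dvd_right β α) (gcd_dvd_left β α)
  obtain ⟨x₁, hx₁⟩ := exists_associated_pow_of_mul_eq_pow hgcd1 hαβ
  obtain ⟨x₂, hx₂⟩ := exists_associated_pow_of_mul_eq_pow hgcd2 (by rwa [mul_comm] at hαβ)
  obtain ⟨u₁, hu₁⟩ := hx₁
  obtain ⟨u₂, hu₂⟩ := hx₂
  have hx₁0 : x₁ ≠ 0 := by
    intro h0
    apply hα0
    rw [← hu₁, h0, zero_pow hl0, zero_mul]
  have hx₂0 : x₂ ≠ 0 := by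
    intro h0
    apply hβ0
    rw [← hu₂, h0, zero_pow hl0, zero_mul]
  -- (x₁ x₂)^l (u₁ u₂) = s^l, so x₁x₂ ∣ s
  have hprod : (x₁ * x₂) ^ l * ((u₁ : Zsqrtd 3) * (u₂ : Zsqrtd 3)) = ((s : Zsqrtd 3)) ^ l := by
    rw [← hαβ, ← hu₁, ← hu₂, mul_pow]; ring
  have hdvd : (x₁ * x₂) ^ l ∣ ((s : Zsqrtd 3)) ^ l := ⟨_, hprod.symm⟩
  have hdvd' : (x₁ * x₂) ∣ ((s : Zsqrtd 3)) := (IsIntegrallyClosed.pow_dvd_pow_iff hl0).1 hdvd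
  obtain ⟨t, ht⟩ := hdvd'
  have hx₁₂0 : (x₁ * x₂) ^ l ≠ 0 := pow_ne_zero _ (mul_ne_zero hx₁0 hx₂0)
  have htl : t ^ l = (u₁ : Zsqrtd 3) * (u₂ : Zsqrtd 3) := by
    have e : (x₁ * x₂) ^ l * t ^ l = (x₁ * x₂) ^ l * ((u₁ : Zsqrtd 3) * (u₂ : Zsqrtd 3)) := by
      rw [hprod, ← mul_pow, ← ht]
    exact mul_left_cancel₀ hx₁₂0 e
  have htu : IsUnit t := by
    have : t ∣ ((u₁ * u₂ : (Zsqrtd 3)ˣ) : Zsqrtd 3) := by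
      rw [Units.val_mul, ← htl]
      exact dvd_pow_self t hl0
    exact isUnit_of_dvd_unit this (u₁ * u₂).isUnit
  obtain ⟨τ, rfl⟩ := htu
  have hττ : τ ^ l = u₁ * u₂ := by
    apply Units.ext
    push_cast
    rw [← htl]
  -- assemble
  refine ⟨x₁, x₂ * (τ : Zsqrtd 3), hx₁0, mul_ne_zero hx₂0 τ.isUnit.ne_zero, u₁, ?_, ?_⟩
  · have e1 : sqrt3 * (u : Zsqrtd 3) - (v : Zsqrtd 3) = sqrt3 * α := by
      subst hw
      simp [sqrt3, hα, Zsqrtd.ext_iff, Zsqrtd.re_mul, Zsqrtd.im_mul, Zsqrtd.re_sub, Zsqrtd.im_sub]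
    rw [e1, ← hu₁, mul_assoc]
  · have e2 : sqrt3 * (u : Zsqrtd 3) + (v : Zsqrtd 3) = sqrt3 * β := by
      subst hw
      simp [sqrt3, hβ, Zsqrtd.ext_iff, Zsqrtd.re_mul, Zsqrtd.im_mul, Zsqrtd.re_add, Zsqrtd.im_add]
    have hu₂' : (u₂ : Zsqrtd 3) = (τ : Zsqrtd 3) ^ l * ((u₁⁻¹ : (Zsqrtd 3)ˣ) : Zsqrtd 3) := by
      have h' : u₂ = τ ^ l * u₁⁻¹ := by
        rw [hττ, mul_comm u₁ u₂, mul_inv_cancel_right]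
      rw [h']
      push_cast
      ring
    rw [e2, ← hu₂, hu₂', mul_pow]
    ring
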